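/- Let f ∈ ℝ[X₁,…,Xₙ] be a polynomial with f(0) = 0 and ∇f(0) = 0. Suppose 𝒭 > 0 satisfies Condition 1, R is an isolation radius of 0, and R < 𝒭. Then 0 is a local minimizer of f if and only if f(x) > 0 for every x ∈ Γ_ℝ(f) ∩ S_R. -/

import Mathlib

open MvPolynomial Metric Set
open scoped InnerProductSpace

noncomputable section

/-- The gradient of a real polynomial `f`, as a map on `ℝⁿ`. -/
def grad {n : ℕ} (f : MvPolynomial (Fin n) ℝ) (x : EuclideanSpace ℝ (Fin n)) :
    EuclideanSpace ℝ (Fin n) :=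
  WithLp.toLp 2 (fun i => eval (fun j => x j) (pderiv i f))

/-- Evaluation of a polynomial as a function on `ℝⁿ`. -/
def evalP {n : ℕ} (f : MvPolynomial (Fin n) ℝ) (x : EuclideanSpace ℝ (Fin n)) : ℝ :=
  eval (fun j => x j) f

/-- The tangency variety `Γ_ℝ(f) = {x | ∃ λ, ∇f(x) = λ x}`. -/
def Gamma {n : ℕ} (f : MvPolynomial (Fin n) ℝ) : Set (EuclideanSpace ℝ (Fin n)) :=
  {x | ∃ l : ℝ, grad f x = l • x}

/-- The set of real critical points `Crit_ℝ(f) = {x | ∇f(x) = 0}`. -/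
def Crit {n : ℕ} (f : MvPolynomial (Fin n) ℝ) : Set (EuclideanSpace ℝ (Fin n)) :=
  {x | grad f x = 0}

/-- Condition 1 for the radius `sR`: for every nonzero `u ∈ Γ_ℝ(f)` with `‖u‖ < sR`,
there exist a neighborhood `O ⊆ B_sR` of `u`, reals `a < t̄ < b` and a differentiable
map `φ : (a,b) → ℝⁿ` with `φ((a,b)) = Γ_ℝ(f) ∩ O`, `φ(t̄) = u`, and the derivative of
`t ↦ Σᵢ φᵢ(t)² = ‖φ(t)‖²` at `t̄` nonzero. -/
def Cond1 {n : ℕ} (f : MvPolynomial (Fin n) ℝ) (sR : ℝ) : Prop :=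
  ∀ u ∈ Gamma f, u ≠ 0 → ‖u‖ < sR →
    ∃ (O : Set (EuclideanSpace ℝ (Fin n))) (a b tb : ℝ)
      (φ : ℝ → EuclideanSpace ℝ (Fin n)),
      O ∈ nhds u ∧ O ⊆ closedBall (0 : EuclideanSpace ℝ (Fin n)) sR ∧
      a < tb ∧ tb < b ∧
      (∀ t ∈ Ioo a b, DifferentiableAt ℝ φ t) ∧
      φ '' Ioo a b = Gamma f ∩ O ∧ φ tb = u ∧
      deriv (fun t => ‖φ t‖ ^ 2) tb ≠ 0

lemma inner_eq_sum {n : ℕ} (x y : EuclideanSpace ℝ (Fin n)) :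
    ⟪x, y⟫_ℝ = ∑ i, x i * y i := by
  simp [PiLp.inner_apply, RCLike.inner_apply, starRingEnd_apply]
  exact Finset.sum_congr rfl fun _ _ => mul_comm _ _

lemma hasStrictFDerivAt_evalP {n : ℕ} (f : MvPolynomial (Fin n) ℝ)
    (x : EuclideanSpace ℝ (Fin n)) :
    HasStrictFDerivAt (evalP f) (innerSL ℝ (grad f x)) x := by
  induction f using MvPolynomial.induction_on with
  | C a =>
      have h1 : evalP (C a : MvPolynomial (Fin n) ℝ) = fun _ => a := by
        funext y; simp [evalP]
      have h2 : grad (C a : MvPolynomial (Fin n) ℝ) x = 0 := by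
        ext i; simp [grad, pderiv_C]
      rw [h1, h2]
      simpa using hasStrictFDerivAt_const (a : ℝ) x
  | add p q hp hq =>
      have h1 : evalP (p + q) = fun y => evalP p y + evalP q y := by
        funext y; simp [evalP]
      have h2 : grad (p + q) x = grad p x + grad q x := by
        ext i; simp [grad, map_add]
      rw [h1, h2, map_add]
      exact hp.add hq
  | mul_X p i hp =>
      have h1 : evalP (p * X i) = fun y => evalP p y * (fun y : EuclideanSpace ℝ (Fin n) => y i) y := by
        funext y; simp [evalP]
      have hproj : HasStrictFDerivAt (fun y : EuclideanSpace ℝ (Fin n) => y i)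
          (EuclideanSpace.proj (𝕜 := ℝ) i) x := (EuclideanSpace.proj (𝕜 := ℝ) i).hasStrictFDerivAt
      have := hp.mul hproj
      rw [h1]
      refine this.congr_fderiv ?_
      ext v
      simp only [innerSL_apply_apply, ContinuousLinearMap.add_apply, ContinuousLinearMap.coe_smul',
        Pi.smul_apply, smul_eq_mul]
      rw [inner_eq_sum, inner_eq_sum]
      classical
      have hg : ∀ j, grad (p * X i) x j * v j
          = x i * (grad p x j * v j) + (if i = j then evalP p x * v j else 0) := by
        intro j
        have : grad (p * X i) x j = grad p x j * x i + evalP p x * (if i = j then 1 else 0) := by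
          simp only [grad, PiLp.toLp_apply, pderiv_mul, map_add, map_mul, eval_X, pderiv_X, Pi.single_apply, evalP]
          by_cases h : i = j <;> simp [h] <;> ring
        rw [this]
        by_cases h : i = j <;> simp [h] <;> ring
      rw [Finset.sum_congr rfl fun j _ => hg j, Finset.sum_add_distrib,
        Finset.sum_ite_eq Finset.univ i (fun j => evalP p x * v j)]
      simp only [← Finset.mul_sum, Finset.mem_univ, if_true]
      have : (EuclideanSpace.proj (𝕜 := ℝ) i) v = v i := rfl
      rw [this]; ring

lemma hasFDerivAt_evalP {n : ℕ} (f : MvPolynomial (Fin n) ℝ) (x : EuclideanSpace ℝ (Fin n)) :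
    HasFDerivAt (evalP f) (innerSL ℝ (grad f x)) x :=
  (hasStrictFDerivAt_evalP f x).hasFDerivAt

lemma continuous_evalP {n : ℕ} (f : MvPolynomial (Fin n) ℝ) : Continuous (evalP f) :=
  continuous_iff_continuousAt.2 fun x => (hasFDerivAt_evalP f x).continuousAt

lemma continuous_grad {n : ℕ} (f : MvPolynomial (Fin n) ℝ) : Continuous (grad f) := by
  have h : Continuous fun x : EuclideanSpace ℝ (Fin n) =>
      (fun i => evalP (pderiv i f) x : Fin n → ℝ) :=
    continuous_pi fun i => continuous_evalP (pderiv i f)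
  exact (PiLp.continuous_toLp (p := 2) (β := fun _ : Fin n => ℝ)).comp h

lemma grad_eq_zero_of_isLocalMin {n : ℕ} {f : MvPolynomial (Fin n) ℝ}
    {x : EuclideanSpace ℝ (Fin n)} (h : IsLocalMin (evalP f) x) : grad f x = 0 := by
  have h0 := h.hasFDerivAt_eq_zero (hasFDerivAt_evalP f x)
  have := congrArg (fun L : EuclideanSpace ℝ (Fin n) →L[ℝ] ℝ => L (grad f x)) h0
  simp only [innerSL_apply_apply, ContinuousLinearMap.zero_apply] at this
  exact inner_self_eq_zero.mp this

lemma deriv_sign_lemma {g : ℝ → ℝ} {t₀ d : ℝ} (hg : HasDerivAt g d t₀) (hd : d ≠ 0) :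
    ∃ ε > 0, ∀ t, t ≠ t₀ → |t - t₀| < ε → 0 < (g t - g t₀) * (d * (t - t₀)) := by
  have h := hasDerivAt_iff_tendsto_slope.mp hg
  have hball : Metric.ball d |d| ∈ nhds d := Metric.ball_mem_nhds _ (abs_pos.mpr hd)
  have h2 := h hball
  rw [Filter.mem_map, Metric.mem_nhdsWithin_iff] at h2
  obtain ⟨ε, hε, hsub⟩ := h2
  refine ⟨ε, hε, fun t ht hlt => ?_⟩
  have htmem : t ∈ Metric.ball t₀ ε ∩ {t₀}ᶜ := ⟨by simpa [Real.dist_eq] using hlt, ht⟩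
  have hs := hsub htmem
  simp only [Set.mem_preimage, Metric.mem_ball, Real.dist_eq] at hs
  have hslope : slope g t₀ t * d > 0 := by
    rcases lt_or_gt_of_ne hd with hneg | hpos
    · have : slope g t₀ t < d + |d| := by
        have := abs_lt.mp hs; linarith [this.2]
      have h3 : slope g t₀ t < 0 := by rw [abs_of_neg hneg] at this; linarith
      exact mul_pos_of_neg_of_neg h3 hneg
    · have := abs_lt.mp hs
      have h3 : slope g t₀ t > 0 := by rw [abs_of_pos hpos] at this; linarith [this.1]
      exact mul_pos h3 hpos
  have hne : t - t₀ ≠ 0 := sub_ne_zero.mpr ht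
  have : (g t - g t₀) * (d * (t - t₀)) = (slope g t₀ t * d) * (t - t₀)^2 := by
    rw [slope_def_field]
    field_simp
  rw [this]
  positivity

def normP (n : ℕ) : MvPolynomial (Fin n) ℝ := ∑ i, X i * X i

lemma evalP_normP {n : ℕ} (x : EuclideanSpace ℝ (Fin n)) :
    evalP (normP n) x = ⟪x, x⟫_ℝ := by
  rw [inner_eq_sum]
  simp [normP, evalP, map_sum]

lemma grad_normP {n : ℕ} (x : EuclideanSpace ℝ (Fin n)) :
    grad (normP n) x = (2 : ℝ) • x := by
  ext j
  classical
  have h1 : grad (normP n) x j = ∑ i, ((if i = j then x i else 0) + (if i = j then x i else 0)) := by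
    simp only [grad, PiLp.toLp_apply, normP, map_sum, pderiv_mul, pderiv_X, Pi.single_apply, evalP, map_add,
      map_mul, eval_X, apply_ite, map_one, map_zero, ite_mul, mul_ite, one_mul, mul_one,
      zero_mul, mul_zero]
  rw [h1]
  simp only [Finset.sum_add_distrib, Finset.sum_ite_eq' Finset.univ j, Finset.mem_univ, if_true]
  have h2 : ((2 : ℝ) • x) j = 2 * x j := rfl
  rw [h2]; ring

lemma mem_Gamma_of_isMinOn_sphere {n : ℕ} (f : MvPolynomial (Fin n) ℝ)
    {w : EuclideanSpace ℝ (Fin n)} {r : ℝ} (hr : 0 < r) (hw : ‖w‖ = r)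
    (hmin : ∀ x : EuclideanSpace ℝ (Fin n), ‖x‖ = r → evalP f w ≤ evalP f x) :
    w ∈ Gamma f := by
  have hset : ∀ x : EuclideanSpace ℝ (Fin n), evalP (normP n) x = evalP (normP n) w → ‖x‖ = r := by
    intro x hx
    rw [evalP_normP, evalP_normP, real_inner_self_eq_norm_sq, real_inner_self_eq_norm_sq] at hx
    have := congrArg Real.sqrt hx
    rwa [Real.sqrt_sq (norm_nonneg _), Real.sqrt_sq (norm_nonneg _), hw] at this
  have hextr : IsLocalExtrOn (evalP f) {x | evalP (normP n) x = evalP (normP n) w} w := by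
    exact Or.inl (eventually_nhdsWithin_of_forall fun x hx => hmin x (hset x hx))
  obtain ⟨a, b, hab, heq⟩ := hextr.exists_multipliers_of_hasStrictFDerivAt_1d
    (hasStrictFDerivAt_evalP (normP n) w) (hasStrictFDerivAt_evalP f w)
  by_cases hb : b = 0
  · exfalso
    have ha : a ≠ 0 := by
      intro h0; apply hab; simp [h0, hb]
    have := congrArg (fun L : EuclideanSpace ℝ (Fin n) →L[ℝ] ℝ => L w) heq
    simp only [ContinuousLinearMap.add_apply, ContinuousLinearMap.coe_smul', Pi.smul_apply,
      innerSL_apply_apply, ContinuousLinearMap.zero_apply, smul_eq_mul, hb, zero_mul, add_zero] at this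
    rw [grad_normP, real_inner_smul_left, real_inner_self_eq_norm_sq, hw] at this
    have : a * (2 * r ^ 2) = 0 := this
    rcases mul_eq_zero.mp this with h | h
    · exact ha h
    · nlinarith
  · refine ⟨-(2 * a) / b, ?_⟩
    have key : ∀ v : EuclideanSpace ℝ (Fin n),
        ⟪b • grad f w + (2 * a) • w, v⟫_ℝ = 0 := by
      intro v
      have := congrArg (fun L : EuclideanSpace ℝ (Fin n) →L[ℝ] ℝ => L v) heq
      simp only [ContinuousLinearMap.add_apply, ContinuousLinearMap.coe_smul', Pi.smul_apply,
        innerSL_apply_apply, ContinuousLinearMap.zero_apply, smul_eq_mul] at this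
      rw [grad_normP, real_inner_smul_left] at this
      rw [inner_add_left, real_inner_smul_left, real_inner_smul_left]
      linarith
    have hzero : b • grad f w + (2 * a) • w = 0 := by
      have := key (b • grad f w + (2 * a) • w)
      exact inner_self_eq_zero.mp this
    have : grad f w = (b⁻¹ * -(2 * a)) • w := by
      have h1 : b • grad f w = -(2 * a) • w := by
        rw [← sub_eq_zero]; rw [sub_eq_add_neg, ← neg_smul] at *; linear_combination (norm := module) hzero
      calc grad f w = b⁻¹ • (b • grad f w) := by rw [smul_smul, inv_mul_cancel₀ hb, one_smul]
      _ = b⁻¹ • (-(2 * a) • w) := by rw [h1]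
      _ = (b⁻¹ * -(2 * a)) • w := by rw [smul_smul]
    rw [this]
    congr 1
    field_simp

lemma curve_derivs {n : ℕ} (f : MvPolynomial (Fin n) ℝ) {φ : ℝ → EuclideanSpace ℝ (Fin n)}
    {tb : ℝ} (hdiff : DifferentiableAt ℝ φ tb) {y : EuclideanSpace ℝ (Fin n)} (hy : φ tb = y) :
    HasDerivAt (fun t => ‖φ t‖ ^ 2) (2 * ⟪y, deriv φ tb⟫_ℝ) tb ∧
    HasDerivAt (fun t => evalP f (φ t)) (⟪grad f y, deriv φ tb⟫_ℝ) tb := by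
  have hφ : HasDerivAt φ (deriv φ tb) tb := hdiff.hasDerivAt
  constructor
  · have h1 : HasDerivAt (fun t => ⟪φ t, φ t⟫_ℝ)
        (⟪φ tb, deriv φ tb⟫_ℝ + ⟪deriv φ tb, φ tb⟫_ℝ) tb := hφ.inner ℝ hφ
    have h2 : (fun t => ⟪φ t, φ t⟫_ℝ) = fun t => ‖φ t‖ ^ 2 := by
      funext t; exact real_inner_self_eq_norm_sq _
    rw [h2, hy, real_inner_comm (deriv φ tb) y] at h1
    convert h1 using 1
    rw [real_inner_comm y (deriv φ tb)]; ring
  · have h3 := (hasFDerivAt_evalP f (φ tb)).comp_hasDerivAt tb hφ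
    rw [hy] at h3
    have h4 : (innerSL ℝ (grad f y)) (deriv φ tb) = ⟪grad f y, deriv φ tb⟫_ℝ := rfl
    rw [h4] at h3
    exact h3

lemma norm_le_of_sq_le {n : ℕ} {x : EuclideanSpace ℝ (Fin n)} {r : ℝ} (hr : 0 ≤ r)
    (h : ‖x‖ ^ 2 ≤ r ^ 2) : ‖x‖ ≤ r := by nlinarith [norm_nonneg x]

lemma norm_lt_of_sq_lt {n : ℕ} {x : EuclideanSpace ℝ (Fin n)} {r : ℝ} (hr : 0 ≤ r)
    (h : ‖x‖ ^ 2 < r ^ 2) : ‖x‖ < r := by nlinarith [norm_nonneg x]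

lemma le_norm_of_sq_le {n : ℕ} {x : EuclideanSpace ℝ (Fin n)} {r : ℝ} (hr : 0 ≤ r)
    (h : r ^ 2 ≤ ‖x‖ ^ 2) : r ≤ ‖x‖ := by nlinarith [norm_nonneg x]

lemma isClosed_gamma_annulus {n : ℕ} (f : MvPolynomial (Fin n) ℝ) {α β : ℝ} (hα : 0 < α) :
    IsClosed {x : EuclideanSpace ℝ (Fin n) | (α ≤ ‖x‖ ∧ ‖x‖ ≤ β) ∧ x ∈ Gamma f} := by
  have hGcont : Continuous fun x : EuclideanSpace ℝ (Fin n) =>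
      ⟪x, x⟫_ℝ • grad f x - ⟪grad f x, x⟫_ℝ • x := by
    apply Continuous.sub
    · exact (continuous_id.inner (𝕜 := ℝ) continuous_id).smul (continuous_grad f)
    · exact ((continuous_grad f).inner (𝕜 := ℝ) continuous_id).smul continuous_id
  have hset : {x : EuclideanSpace ℝ (Fin n) | (α ≤ ‖x‖ ∧ ‖x‖ ≤ β) ∧ x ∈ Gamma f}
      = ({x | α ≤ ‖x‖} ∩ {x | ‖x‖ ≤ β}) ∩
        {x | ⟪x, x⟫_ℝ • grad f x - ⟪grad f x, x⟫_ℝ • x = 0} := by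
    ext x
    simp only [Set.mem_setOf_eq, Set.mem_inter_iff]
    constructor
    · rintro ⟨⟨h1, h2⟩, ⟨l, hl⟩⟩
      refine ⟨⟨h1, h2⟩, ?_⟩
      rw [hl, real_inner_smul_left]
      module
    · rintro ⟨⟨h1, h2⟩, hz⟩
      refine ⟨⟨h1, h2⟩, ⟨⟪grad f x, x⟫_ℝ / ⟪x, x⟫_ℝ, ?_⟩⟩
      have hx0 : x ≠ 0 := by
        intro h; rw [h] at h1; simp at h1; linarith
      have hxx : ⟪x, x⟫_ℝ ≠ 0 := by
        rw [real_inner_self_eq_norm_sq]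
        exact pow_ne_zero 2 (norm_ne_zero_iff.mpr hx0)
      have hz' : ⟪x, x⟫_ℝ • grad f x = ⟪grad f x, x⟫_ℝ • x := by
        rwa [sub_eq_zero] at hz
      rw [div_eq_mul_inv, mul_comm, ← smul_smul]
      rw [← hz', smul_smul, inv_mul_cancel₀ hxx, one_smul]
  rw [hset]
  exact ((isClosed_le continuous_const continuous_norm).inter
    (isClosed_le continuous_norm continuous_const)).inter
    (isClosed_eq hGcont continuous_const)

lemma exists_decreasing_side {h : ℝ → ℝ} {dh tb a b lower ε₀ : ℝ}
    (hh : HasDerivAt h dh tb) (hd : dh ≠ 0) (ha : a < tb) (hb : tb < b)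
    (hlow : lower < h tb) (hε₀ : 0 < ε₀) :
    ∃ t₁, t₁ ≠ tb ∧ h t₁ < h tb ∧
      ∀ s ∈ Icc (min t₁ tb) (max t₁ tb),
        (a < s ∧ s < b) ∧ h s ≤ h tb ∧ lower < h s ∧ |s - tb| < ε₀ ∧
        (s ≠ tb → h s < h tb ∧ dh * (s - tb) < 0) := by
  obtain ⟨ε₁, hε₁, hsign⟩ := deriv_sign_lemma hh hd
  obtain ⟨δc, hδc, hcont⟩ := Metric.continuousAt_iff.mp hh.continuousAt (h tb - lower) (by linarith)
  set M := min (min ε₁ δc) (min (min (tb - a) (b - tb)) ε₀) with hMdef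
  have hM : 0 < M := by
    apply lt_min (lt_min hε₁ hδc)
    exact lt_min (lt_min (by linarith) (by linarith)) hε₀
  set ε := M / 2 with hεdef
  have hεpos : 0 < ε := by positivity
  have hεM : ε < M := by rw [hεdef]; linarith
  have hlt1 : ε < ε₁ := lt_of_lt_of_le hεM ((min_le_left _ _).trans (min_le_left _ _))
  have hlt2 : ε < δc := lt_of_lt_of_le hεM ((min_le_left _ _).trans (min_le_right _ _))
  have hlt3 : ε < tb - a := lt_of_lt_of_le hεM ((min_le_right _ _).trans
    ((min_le_left _ _).trans (min_le_left _ _)))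
  have hlt4 : ε < b - tb := lt_of_lt_of_le hεM ((min_le_right _ _).trans
    ((min_le_left _ _).trans (min_le_right _ _)))
  have hlt5 : ε < ε₀ := lt_of_lt_of_le hεM ((min_le_right _ _).trans (min_le_right _ _))
  -- main per-point fact
  have key : ∀ s, s ≠ tb → |s - tb| ≤ ε → (h s < h tb ∧ dh * (s - tb) < 0) ∨
      (h s > h tb ∧ dh * (s - tb) > 0) := by
    intro s hs hsε
    have h1 := hsign s hs (lt_of_le_of_lt hsε hlt1)
    rcases lt_or_gt_of_ne (mul_ne_zero hd (sub_ne_zero.mpr hs)) with hneg | hpos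
    · left
      refine ⟨?_, hneg⟩
      nlinarith
    · right
      refine ⟨?_, hpos⟩
      nlinarith
  have hcont' : ∀ s, |s - tb| ≤ ε → lower < h s := by
    intro s hsε
    have := hcont (x := s) (by rw [Real.dist_eq]; exact lt_of_le_of_lt hsε hlt2)
    rw [Real.dist_eq] at this
    have := abs_lt.mp this
    linarith [this.1]
  rcases lt_or_gt_of_ne hd with hdneg | hdpos
  · -- dh < 0 : go right, t₁ = tb + ε
    refine ⟨tb + ε, by linarith, ?_, ?_⟩
    · have := key (tb + ε) (by intro hc; linarith)
        (by rw [show tb + ε - tb = ε by ring, abs_of_nonneg hεpos.le])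
      rcases this with ⟨h1, _⟩ | ⟨_, h2⟩
      · exact h1
      · exfalso; nlinarith
    · intro s hs
      rw [min_eq_right (by linarith : tb ≤ tb + ε), max_eq_left (by linarith : tb ≤ tb + ε)] at hs
      obtain ⟨hs1, hs2⟩ := hs
      have habs : |s - tb| ≤ ε := by rw [abs_of_nonneg (by linarith)]; linarith
      have hside : ∀ hsne : s ≠ tb, h s < h tb ∧ dh * (s - tb) < 0 := by
        intro hsne
        rcases key s hsne habs with hcase | ⟨_, h2⟩
        · exact hcase
        · exfalso
          have hspos : 0 < s - tb := lt_of_le_of_ne (by linarith) (fun hc => hsne (by linarith))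
          nlinarith
      refine ⟨⟨by linarith, by linarith⟩, ?_, hcont' s habs, lt_of_le_of_lt habs hlt5, hside⟩
      by_cases hsne : s = tb
      · rw [hsne]
      · exact (hside hsne).1.le
  · -- dh > 0 : go left, t₁ = tb - ε
    refine ⟨tb - ε, by linarith, ?_, ?_⟩
    · have := key (tb - ε) (by intro hc; linarith)
        (by rw [show tb - ε - tb = -ε by ring, abs_neg, abs_of_nonneg hεpos.le])
      rcases this with ⟨h1, _⟩ | ⟨_, h2⟩
      · exact h1
      · exfalso; nlinarith
    · intro s hs
      rw [min_eq_left (by linarith : tb - ε ≤ tb), max_eq_right (by linarith : tb - ε ≤ tb)] at hs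
      obtain ⟨hs1, hs2⟩ := hs
      have habs : |s - tb| ≤ ε := by rw [abs_of_nonpos (by linarith)]; linarith
      have hside : ∀ hsne : s ≠ tb, h s < h tb ∧ dh * (s - tb) < 0 := by
        intro hsne
        rcases key s hsne habs with hcase | ⟨_, h2⟩
        · exact hcase
        · exfalso
          have hsneg : s - tb < 0 := lt_of_le_of_ne (by linarith) (fun hc => hsne (by linarith))
          nlinarith
      refine ⟨⟨by linarith, by linarith⟩, ?_, hcont' s habs, lt_of_le_of_lt habs hlt5, hside⟩
      by_cases hsne : s = tb
      · rw [hsne]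
      · exact (hside hsne).1.le


set_option maxHeartbeats 2000000 in
/-- If `sR > 0` satisfies Condition 1, `R` is an isolation radius of `0`, and
`R < sR`, then `0` is a local minimizer of `f` if and only if `f(x) > 0` for every `x ∈ Γ_ℝ(f) ∩ S_R`. -/
theorem stmt14 (n : ℕ) (f : MvPolynomial (Fin n) ℝ)
    (hf0 : evalP f 0 = 0) (hgrad : grad f 0 = 0)
    (sR : ℝ) (hsR : 0 < sR) (hcond : Cond1 f sR) (R : ℝ) (hR : 0 < R)
    (hiso : Crit f ∩ closedBall (0 : EuclideanSpace ℝ (Fin n)) R = {0}) (hRlt : R < sR) :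
    IsLocalMin (evalP f) 0 ↔
      ∀ x ∈ Gamma f ∩ sphere (0 : EuclideanSpace ℝ (Fin n)) R, 0 < evalP f x := by
  have crit0 : ∀ p : EuclideanSpace ℝ (Fin n), grad f p = 0 → ‖p‖ ≤ R → p = 0 := by
    intro p hp hpR
    have : p ∈ Crit f ∩ closedBall (0 : EuclideanSpace ℝ (Fin n)) R :=
      ⟨hp, mem_closedBall_zero_iff.2 hpR⟩
    rw [hiso] at this
    exact this
  constructor
  · -- forward direction
    intro hmin u hu
    by_contra hnot
    push_neg at hnot
    obtain ⟨huΓ, huS⟩ := hu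
    have huR : ‖u‖ = R := mem_sphere_zero_iff_norm.1 huS
    have hu0 : u ≠ 0 := by
      intro h; rw [h] at huR; simp at huR; linarith
    -- δ with f ≥ 0 on ball 0 (2δ-ish)
    obtain ⟨ε, hε, hball⟩ := Metric.eventually_nhds_iff_ball.mp hmin
    set δ := min ε R / 4 with hδdef
    have hδpos : 0 < δ := by
      rw [hδdef]; have := lt_min hε hR; positivity
    have h2δε : 2 * δ < ε := by
      rw [hδdef]
      have h1 : min ε R ≤ ε := min_le_left _ _
      have h2 : 0 < min ε R := lt_min hε hR
      linarith
    have h2δR : 2 * δ < R := by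
      rw [hδdef]
      have h1 : min ε R ≤ R := min_le_right _ _
      have h2 : 0 < min ε R := lt_min hε hR
      linarith
    have hnn : ∀ y : EuclideanSpace ℝ (Fin n), ‖y‖ ≤ 2 * δ → 0 ≤ evalP f y := by
      intro y hy
      have : y ∈ ball (0 : EuclideanSpace ℝ (Fin n)) ε := by
        rw [mem_ball_zero_iff]; linarith
      have := hball y this
      rwa [hf0] at this
    have hposlt : ∀ y : EuclideanSpace ℝ (Fin n), ‖y‖ < 2 * δ → y ≠ 0 → 0 < evalP f y := by
      intro y h1 h2
      rcases (hnn y h1.le).lt_or_eq with h | h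
      · exact h
      · exfalso
        have hloc : IsLocalMin (evalP f) y := by
          have hmem : ball (0 : EuclideanSpace ℝ (Fin n)) (2 * δ) ∈ nhds y :=
            (isOpen_ball).mem_nhds (mem_ball_zero_iff.2 h1)
          apply IsMinOn.isLocalMin _ hmem
          intro z hz
          rw [← h]
          exact hnn z (mem_ball_zero_iff.1 hz).le
        exact h2 (crit0 y (grad_eq_zero_of_isLocalMin hloc) (by linarith))
    -- τ : min of f on sphere δ
    have hsphne : (sphere (0 : EuclideanSpace ℝ (Fin n)) δ).Nonempty := by
      refine ⟨(δ / R) • u, ?_⟩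
      rw [mem_sphere_zero_iff_norm, norm_smul, Real.norm_eq_abs, huR,
        abs_of_pos (by positivity)]
      field_simp
    obtain ⟨mδ, hmδS, hmδmin⟩ := (isCompact_sphere (0 : EuclideanSpace ℝ (Fin n)) δ).exists_isMinOn
      hsphne (continuous_evalP f).continuousOn
    replace hmδmin := isMinOn_iff.mp hmδmin
    set τ := evalP f mδ with hτdef
    have hmδnorm : ‖mδ‖ = δ := mem_sphere_zero_iff_norm.1 hmδS
    have hτpos : 0 < τ :=
      hposlt mδ (by rw [hmδnorm]; linarith) (by
        intro h; rw [h] at hmδnorm; simp at hmδnorm; linarith)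
    have hτmin : ∀ x : EuclideanSpace ℝ (Fin n), ‖x‖ = δ → τ ≤ evalP f x := by
      intro x hx
      exact hmδmin x (mem_sphere_zero_iff_norm.2 hx)
    -- η
    obtain ⟨η₀, hη₀, hηcont⟩ := Metric.continuousAt_iff.mp (continuous_evalP f).continuousAt
      τ hτpos
    set η := min η₀ δ / 2 with hηdef
    have hηpos : 0 < η := by
      rw [hηdef]; have := lt_min hη₀ hδpos; positivity
    have hηδ : η < δ := by
      rw [hηdef]
      have h1 : min η₀ δ ≤ δ := min_le_right _ _
      have h2 : 0 < min η₀ δ := lt_min hη₀ hδpos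
      linarith
    have hηsmall : ∀ y : EuclideanSpace ℝ (Fin n), ‖y‖ ≤ η → evalP f y < τ := by
      intro y hy
      have hd : dist y (0 : EuclideanSpace ℝ (Fin n)) < η₀ := by
        rw [dist_zero_right]
        have h1 : min η₀ δ ≤ η₀ := min_le_left _ _
        have h2 : 0 < min η₀ δ := lt_min hη₀ hδpos
        rw [hηdef] at hy; linarith
      have := hηcont hd
      rw [hf0, dist_zero_right, Real.norm_eq_abs] at this
      have := abs_lt.mp this
      linarith [this.2]
    -- the set E and minimal norm point w
    set Es := {x : EuclideanSpace ℝ (Fin n) |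
      (δ ≤ ‖x‖ ∧ ‖x‖ ≤ R) ∧ evalP f x ≤ 0} with hEsdef
    have hEsclosed : IsClosed Es := by
      have : Es = ({x : EuclideanSpace ℝ (Fin n) | δ ≤ ‖x‖} ∩ {x | ‖x‖ ≤ R}) ∩
          {x | evalP f x ≤ 0} := by
        ext x; simp [hEsdef, and_assoc]
      rw [this]
      exact ((isClosed_le continuous_const continuous_norm).inter
        (isClosed_le continuous_norm continuous_const)).inter
        (isClosed_le (continuous_evalP f) continuous_const)
    have hEscompact : IsCompact Es :=
      (isCompact_closedBall (0 : EuclideanSpace ℝ (Fin n)) R).of_isClosed_subset hEsclosed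
        (fun x hx => mem_closedBall_zero_iff.2 hx.1.2)
    have hEsne : Es.Nonempty := ⟨u, ⟨⟨by rw [huR]; linarith, huR.le⟩, hnot⟩⟩
    obtain ⟨w, hwE, hwmin⟩ := hEscompact.exists_isMinOn hEsne continuous_norm.continuousOn
    replace hwmin := isMinOn_iff.mp hwmin
    set ρ := ‖w‖ with hρdef
    have hρδ : δ ≤ ρ := hwE.1.1
    have hρR : ρ ≤ R := hwE.1.2
    have hρpos : 0 < ρ := lt_of_lt_of_le hδpos hρδ
    have hw0 : w ≠ 0 := norm_ne_zero_iff.1 hρpos.ne' 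
    -- f nonneg on closed ball ρ
    have hneg2δ : ∀ z : EuclideanSpace ℝ (Fin n), evalP f z < 0 → 2 * δ ≤ ‖z‖ := by
      intro z hz
      by_contra hlt
      push_neg at hlt
      have hz0 : z ≠ 0 := by
        intro h; rw [h, hf0] at hz; linarith
      linarith [hposlt z hlt hz0]
    have hballnn : ∀ x : EuclideanSpace ℝ (Fin n), ‖x‖ ≤ ρ → 0 ≤ evalP f x := by
      by_contra hcon
      push_neg at hcon
      obtain ⟨x, hxρ, hxneg⟩ := hcon
      have hx2δ : 2 * δ ≤ ‖x‖ := hneg2δ x hxneg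
      have hxE : x ∈ Es := ⟨⟨by linarith, le_trans hxρ hρR⟩, hxneg.le⟩
      have hxρ' : ‖x‖ = ρ := le_antisymm hxρ (hwmin x hxE)
      -- shrink
      have hcont1 : Continuous fun t : ℝ => evalP f (t • x) :=
        (continuous_evalP f).comp (continuous_id.smul continuous_const)
      have hopen : {t : ℝ | evalP f (t • x) < 0} ∈ nhds (1 : ℝ) := by
        apply (isOpen_lt hcont1 continuous_const).mem_nhds
        simp only [Set.mem_setOf_eq, one_smul]
        exact hxneg
      obtain ⟨r, hr, hrball⟩ := Metric.mem_nhds_iff.mp hopen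
      set t := 1 - min r 1 / 2 with htdef
      have htmem : t ∈ ball (1 : ℝ) r := by
        rw [mem_ball, Real.dist_eq, htdef]
        have h1 : min r 1 ≤ r := min_le_left _ _
        have h2 : 0 < min r 1 := lt_min hr one_pos
        rw [abs_of_nonpos (by linarith)]
        linarith
      have ht01 : 0 < t ∧ t < 1 := by
        have h1 : min r 1 ≤ 1 := min_le_right _ _
        have h2 : 0 < min r 1 := lt_min hr one_pos
        constructor <;> (rw [htdef]; linarith)
      have htneg : evalP f (t • x) < 0 := hrball htmem
      have htnorm : ‖t • x‖ = t * ρ := by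
        rw [norm_smul, Real.norm_eq_abs, abs_of_pos ht01.1, hxρ']
      have htE : t • x ∈ Es := by
        refine ⟨⟨?_, ?_⟩, htneg.le⟩
        · have := hneg2δ _ htneg; linarith
        · rw [htnorm]; nlinarith [ht01.1, ht01.2]
      have := hwmin _ htE
      rw [htnorm] at this
      nlinarith [ht01.2, hρpos]
    have hfw : evalP f w = 0 := le_antisymm hwE.2 (hballnn w le_rfl)
    have hρ2δ : 2 * δ ≤ ρ := by
      by_contra hcon
      push_neg at hcon
      have := hposlt w (by rw [← hρdef]; exact hcon) hw0
      linarith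
    have hδρ : δ < ρ := by linarith
    -- w ∈ Γ
    have hwΓ : w ∈ Gamma f := by
      apply mem_Gamma_of_isMinOn_sphere f hρpos rfl
      intro x hx
      rw [hfw]
      exact hballnn x hx.le
    -- the function Lam
    set Lam := fun x : EuclideanSpace ℝ (Fin n) => ⟪grad f x, x⟫_ℝ with hLamdef
    have hLamcont : Continuous Lam := (continuous_grad f).inner continuous_id
    have hcritLam : ∀ p : EuclideanSpace ℝ (Fin n), p ∈ Gamma f → p ≠ 0 → ‖p‖ ≤ R →
        Lam p = 0 → False := by
      intro p hpΓ hp0 hpR h0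
      obtain ⟨l, hl⟩ := hpΓ
      rw [hLamdef] at h0
      simp only at h0
      rw [hl, real_inner_smul_left, real_inner_self_eq_norm_sq] at h0
      have hlz : l = 0 := by
        rcases mul_eq_zero.mp h0 with h | h
        · exact h
        · exact absurd h (pow_ne_zero 2 (norm_ne_zero_iff.2 hp0))
      exact hp0 (crit0 p (by rw [hl, hlz, zero_smul]) hpR)
    -- Lam w ≤ 0
    have hLamW : Lam w ≤ 0 := by
      by_contra hcon
      push_neg at hcon
      have hsm : HasDerivAt (fun t : ℝ => t • w) ((1:ℝ) • w) 1 := (hasDerivAt_id (1:ℝ)).smul_const w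
      rw [one_smul] at hsm
      have hF : HasFDerivAt (evalP f) (innerSL ℝ (grad f w)) ((fun t : ℝ => t • w) 1) := by
        rw [show (fun t : ℝ => t • w) 1 = w from one_smul ℝ w]
        exact hasFDerivAt_evalP f w
      have hψ : HasDerivAt (fun t : ℝ => evalP f (t • w)) (Lam w) 1 := by
        have h5 := hF.comp_hasDerivAt 1 hsm
        have h6 : (innerSL ℝ (grad f w)) w = Lam w := rfl
        rw [h6] at h5
        exact h5
      obtain ⟨ε₁, hε₁, hsign⟩ := deriv_sign_lemma hψ hcon.ne'
      set t := 1 - min ε₁ 1 / 2 with htdef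
      have h1 : min ε₁ 1 ≤ 1 := min_le_right _ _
      have h2 : min ε₁ 1 ≤ ε₁ := min_le_left _ _
      have h3 : 0 < min ε₁ 1 := lt_min hε₁ one_pos
      have ht1 : t ≠ 1 := by rw [htdef]; intro hc; linarith
      have habs : |t - 1| < ε₁ := by
        rw [htdef, show 1 - min ε₁ 1 / 2 - 1 = -(min ε₁ 1 / 2) by ring, abs_neg,
          abs_of_nonneg (by linarith)]
        linarith
      have hs := hsign t ht1 habs
      have htpos : 0 < t := by rw [htdef]; linarith
      have ht1' : t < 1 := by rw [htdef]; linarith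
      have hψ1 : evalP f ((1:ℝ) • w) = 0 := by rw [one_smul]; exact hfw
      have htw : ‖t • w‖ ≤ ρ := by
        rw [norm_smul, Real.norm_eq_abs, abs_of_pos htpos]
        nlinarith
      have hge := hballnn (t • w) htw
      have hB : Lam w * (t - 1) < 0 := mul_neg_of_pos_of_neg hcon (by linarith)
      nlinarith
    -- the compact set D and the component C
    set D := {x : EuclideanSpace ℝ (Fin n) | (η ≤ ‖x‖ ∧ ‖x‖ ≤ ρ) ∧ x ∈ Gamma f} with hDdef
    have hDclosed : IsClosed D := isClosed_gamma_annulus f hηpos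
    have hDcompact : IsCompact D :=
      (isCompact_closedBall (0 : EuclideanSpace ℝ (Fin n)) ρ).of_isClosed_subset hDclosed
        (fun x hx => mem_closedBall_zero_iff.2 hx.1.2)
    have hwD : w ∈ D := ⟨⟨by linarith, le_rfl⟩, hwΓ⟩
    set C := connectedComponentIn D w with hCdef
    have hCsub : C ⊆ D := connectedComponentIn_subset _ _
    have hCconn : IsPreconnected C := isPreconnected_connectedComponentIn
    have hwC : w ∈ C := mem_connectedComponentIn hwD
    have hCclosed : IsClosed C := by
      apply isClosed_of_closure_subset
      exact hCconn.closure.subset_connectedComponentIn (subset_closure hwC)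
        (closure_minimal hCsub hDclosed)
    have hCcompact : IsCompact C := hDcompact.of_isClosed_subset hCclosed hCsub
    -- the push lemma along the tangency curve
    have hpush : ∀ y ∈ C, η < ‖y‖ → ∃ z ∈ C, ‖z‖ < ‖y‖ ∧
        (∀ l : ℝ, grad f y = l • y → l < 0 → evalP f y < evalP f z) := by
      intro y hyC hyη
      obtain ⟨⟨hyη', hyρ⟩, hyΓ⟩ := hCsub hyC
      have hy0 : y ≠ 0 := norm_pos_iff.1 (lt_of_lt_of_le hηpos hyη')
      have hysR : ‖y‖ < sR := lt_of_le_of_lt (hyρ.trans hρR) hRlt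
      obtain ⟨O, a, b, tb, φ, hO, hOsub, hatb, htbb, hφdiff, hφim, hφtb, hderiv⟩ :=
        hcond y hyΓ hy0 hysR
      obtain ⟨hh, hg⟩ := curve_derivs f (hφdiff tb ⟨hatb, htbb⟩) hφtb
      have hdh : 2 * ⟪y, deriv φ tb⟫_ℝ ≠ 0 := hh.deriv ▸ hderiv
      have hyd : ⟪y, deriv φ tb⟫_ℝ ≠ 0 := by
        intro hc; apply hdh; rw [hc]; ring
      obtain ⟨l, hl⟩ := hyΓ
      have hεg : ∃ εg > (0:ℝ), l < 0 → ∀ t, t ≠ tb → |t - tb| < εg →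
          0 < (evalP f (φ t) - evalP f (φ tb)) *
            ((⟪grad f y, deriv φ tb⟫_ℝ) * (t - tb)) := by
        by_cases hl0 : l < 0
        · have hdg : ⟪grad f y, deriv φ tb⟫_ℝ ≠ 0 := by
            rw [hl, real_inner_smul_left]
            exact mul_ne_zero hl0.ne hyd
          obtain ⟨εg, hεgpos, hsg⟩ := deriv_sign_lemma hg hdg
          exact ⟨εg, hεgpos, fun _ => hsg⟩
        · exact ⟨1, one_pos, fun hc => absurd hc hl0⟩
      obtain ⟨εg, hεgpos, hsg⟩ := hεg
      have hlow : η ^ 2 < (fun t => ‖φ t‖ ^ 2) tb := by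
        simp only
        rw [hφtb]
        nlinarith
      obtain ⟨t₁, ht₁ne, ht₁lt, hseg⟩ :=
        exists_decreasing_side hh hdh hatb htbb hlow hεgpos
      have hIccIoo : ∀ s ∈ Icc (min t₁ tb) (max t₁ tb), s ∈ Ioo a b :=
        fun s hs => ⟨(hseg s hs).1.1, (hseg s hs).1.2⟩
      have hcontOn : ContinuousOn φ (Icc (min t₁ tb) (max t₁ tb)) :=
        fun s hs => ((hφdiff s (hIccIoo s hs)).continuousAt).continuousWithinAt
      have himD : ∀ s ∈ Icc (min t₁ tb) (max t₁ tb), φ s ∈ D := by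
        intro s hs
        obtain ⟨hab, hhle, hlow2, habs, hstrict⟩ := hseg s hs
        have hφsΓ : φ s ∈ Gamma f := by
          have : φ s ∈ φ '' Ioo a b := ⟨s, hIccIoo s hs, rfl⟩
          rw [hφim] at this
          exact this.1
        have hnorm2 : ‖φ s‖ ^ 2 ≤ ‖φ tb‖ ^ 2 := hhle
        have hlow2' : η ^ 2 < ‖φ s‖ ^ 2 := hlow2
        refine ⟨⟨?_, ?_⟩, hφsΓ⟩
        · exact le_norm_of_sq_le hηpos.le hlow2'.le
        · apply norm_le_of_sq_le hρpos.le
          rw [hφtb] at hnorm2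
          nlinarith [norm_nonneg y]
      have htbIcc : tb ∈ Icc (min t₁ tb) (max t₁ tb) := ⟨min_le_right _ _, le_max_right _ _⟩
      have hyC' : connectedComponentIn D w = connectedComponentIn D y := by
        apply connectedComponentIn_eq
        rw [← hCdef]
        exact hyC
      have hsubC : φ '' Icc (min t₁ tb) (max t₁ tb) ⊆ C := by
        rw [hCdef, hyC']
        apply IsPreconnected.subset_connectedComponentIn
        · exact isPreconnected_Icc.image φ hcontOn
        · exact ⟨tb, htbIcc, hφtb⟩
        · rintro _ ⟨s, hs, rfl⟩; exact himD s hs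
      have ht₁Icc : t₁ ∈ Icc (min t₁ tb) (max t₁ tb) := ⟨min_le_left _ _, le_max_left _ _⟩
      refine ⟨φ t₁, hsubC ⟨t₁, ht₁Icc, rfl⟩, ?_, ?_⟩
      · apply norm_lt_of_sq_lt (norm_nonneg y)
        have : ‖φ t₁‖ ^ 2 < ‖φ tb‖ ^ 2 := ht₁lt
        rwa [hφtb] at this
      · intro l' hl' hl'neg
        have hll : l' = l := by
          have h7 : l' • y = l • y := hl'.symm.trans hl
          have h8 : (l' - l) • y = 0 := by rw [sub_smul, h7, sub_self]
          rcases smul_eq_zero.mp h8 with h | h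
          · linarith [sub_eq_zero.mp (by linarith [h] : l' - l = (0:ℝ))]
          · exact absurd h hy0
        rw [hll] at hl'neg
        obtain ⟨hab, hhle, hlow2, habs, hstrict⟩ := hseg t₁ ht₁Icc
        obtain ⟨hhlt, hdhneg⟩ := hstrict ht₁ne
        have hdgsign := hsg hl'neg t₁ ht₁ne habs
        have hdg_eq : ⟪grad f y, deriv φ tb⟫_ℝ = l * ⟪y, deriv φ tb⟫_ℝ := by
          rw [hl, real_inner_smul_left]
        have hdgpos : 0 < (⟪grad f y, deriv φ tb⟫_ℝ) * (t₁ - tb) := by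
          rw [hdg_eq]
          nlinarith
        have h9 : 0 < evalP f (φ t₁) - evalP f (φ tb) := by nlinarith
        rw [hφtb] at h9
        linarith
    -- minimal norm point of C is on the inner sphere
    obtain ⟨q, hqC, hqmin⟩ := hCcompact.exists_isMinOn ⟨w, hwC⟩ continuous_norm.continuousOn
    replace hqmin := isMinOn_iff.mp hqmin
    have hqη : ‖q‖ = η := by
      rcases ((hCsub hqC).1.1).lt_or_eq with hlt' | heq'
      · exfalso
        obtain ⟨z, hzC, hzlt, _⟩ := hpush q hqC hlt'
        linarith [hqmin z hzC]
      · exact heq'.symm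
    -- a point of C at norm δ
    have hIVT := hCconn.intermediate_value hqC hwC continuous_norm.continuousOn
    have hδmem : δ ∈ Icc ‖q‖ ‖w‖ := by
      rw [hqη]
      exact ⟨hηδ.le, hδρ.le⟩
    obtain ⟨xδ, hxδC, hxδnorm⟩ := hIVT hδmem
    have hfxδ : τ ≤ evalP f xδ := hτmin xδ hxδnorm
    -- dichotomy on the sign of Lam on C
    by_cases hex : ∃ p ∈ C, 0 ≤ Lam p
    · obtain ⟨p, hpC, hp0⟩ := hex
      have h0mem : (0:ℝ) ∈ Icc (Lam w) (Lam p) := ⟨hLamW, hp0⟩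
      obtain ⟨z, hzC, hz0⟩ := hCconn.intermediate_value hwC hpC hLamcont.continuousOn h0mem
      exact hcritLam z ((hCsub hzC).2) (norm_pos_iff.1 (lt_of_lt_of_le hηpos (hCsub hzC).1.1))
        ((hCsub hzC).1.2.trans hρR) hz0
    · push_neg at hex
      obtain ⟨ymax, hymaxC, hymaxmax⟩ :=
        hCcompact.exists_isMaxOn ⟨w, hwC⟩ (continuous_evalP f).continuousOn
      replace hymaxmax := isMaxOn_iff.mp hymaxmax
      have hτy : τ ≤ evalP f ymax := le_trans hfxδ (hymaxmax xδ hxδC)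
      have hyη : η < ‖ymax‖ := by
        rcases ((hCsub hymaxC).1.1).lt_or_eq with hlt' | heq'
        · exact hlt'
        · exfalso
          have := hηsmall ymax heq'.symm.le
          linarith
      obtain ⟨z, hzC, hzlt, hzinc⟩ := hpush ymax hymaxC hyη
      obtain ⟨l, hl⟩ := (hCsub hymaxC).2
      have hLam : Lam ymax < 0 := hex ymax hymaxC
      have hlneg : l < 0 := by
        rw [hLamdef] at hLam
        simp only at hLam
        rw [hl, real_inner_smul_left, real_inner_self_eq_norm_sq] at hLam
        nlinarith [sq_nonneg ‖ymax‖]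
      have := hzinc l hl hlneg
      linarith [hymaxmax z hzC]
  · -- backward direction
    intro hpos
    obtain ⟨w, hwB, hwmin⟩ := (isCompact_closedBall (0 : EuclideanSpace ℝ (Fin n)) R).exists_isMinOn
      ⟨0, mem_closedBall_self hR.le⟩ (continuous_evalP f).continuousOn
    have hwR : ‖w‖ ≤ R := mem_closedBall_zero_iff.1 hwB
    have hwmin' := isMinOn_iff.mp hwmin
    have hwle0 : evalP f w ≤ 0 := by
      have := hwmin' 0 (mem_closedBall_self hR.le)
      rwa [hf0] at this
    rcases hwR.lt_or_eq with hlt | heq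
    · have hloc : IsLocalMin (evalP f) w := by
        apply hwmin.isLocalMin
        exact Filter.mem_of_superset ((isOpen_ball).mem_nhds (mem_ball_zero_iff.2 hlt))
          ball_subset_closedBall
      have hw0 : w = 0 := crit0 w (grad_eq_zero_of_isLocalMin hloc) hwR
      rw [hw0] at hwmin
      exact hwmin.isLocalMin (closedBall_mem_nhds _ hR)
    · exfalso
      have hwΓ : w ∈ Gamma f := by
        apply mem_Gamma_of_isMinOn_sphere f hR heq
        intro x hx
        exact hwmin' x (mem_closedBall_zero_iff.2 hx.le)
      have := hpos w ⟨hwΓ, mem_sphere_zero_iff_norm.2 heq⟩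
      linarith
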